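/- Let n ≥ 1, let D : ℝ → M_n(ℂ) be a continuously differentiable path of Hermitian matrices, and let f : ℝ → ℝ be continuously differentiable. Then the function t ↦ tr(f(D(t))) is differentiable on ℝ, and its derivative at every t equals tr(D′(t)·f′(D(t))). -/

import Mathlib

attribute [local instance] Matrix.normedAddCommGroup Matrix.normedSpace
open Matrix Finset

namespace TCfc
variable {n : ℕ}

lemma trace_mul_diag (N : Matrix (Fin n) (Fin n) ℂ) (d : Fin n → ℂ) :
    (N * diagonal d).trace = ∑ k, N k k * d k := by
  simp [Matrix.trace, Matrix.diag, Matrix.mul_diagonal]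

lemma trace_cfc_herm {A : Matrix (Fin n) (Fin n) ℂ} (hA : A.IsHermitian) (g : ℝ → ℝ) :
    (cfc g A).trace = ∑ k, (g (hA.eigenvalues k) : ℂ) := by
  rw [hA.cfc_eq, Matrix.IsHermitian.cfc, Unitary.conjStarAlgAut_apply, Matrix.trace_mul_cycle]
  rw [Unitary.coe_star_mul_self, Matrix.one_mul, Matrix.trace_diagonal]
  rfl

lemma trace_mul_cfc {A : Matrix (Fin n) (Fin n) ℂ} (hA : A.IsHermitian)
    (M : Matrix (Fin n) (Fin n) ℂ) (g : ℝ → ℝ) :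
    (M * cfc g A).trace =
      ∑ k, ((star (hA.eigenvectorUnitary : Matrix (Fin n) (Fin n) ℂ) * M *
        (hA.eigenvectorUnitary : Matrix (Fin n) (Fin n) ℂ)) k k) * (g (hA.eigenvalues k) : ℂ) := by
  rw [hA.cfc_eq, Matrix.IsHermitian.cfc, Unitary.conjStarAlgAut_apply]
  have : M * ((hA.eigenvectorUnitary : Matrix (Fin n) (Fin n) ℂ) *
      diagonal (RCLike.ofReal ∘ g ∘ hA.eigenvalues) *
      star (hA.eigenvectorUnitary : Matrix (Fin n) (Fin n) ℂ)) =
      (M * (hA.eigenvectorUnitary : Matrix (Fin n) (Fin n) ℂ)) *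
      diagonal (RCLike.ofReal ∘ g ∘ hA.eigenvalues) *
      star (hA.eigenvectorUnitary : Matrix (Fin n) (Fin n) ℂ) := by
    noncomm_ring
  rw [this, Matrix.trace_mul_cycle, trace_mul_diag]
  simp [Matrix.mul_assoc]



noncomputable def pmat {A B : Matrix (Fin n) (Fin n) ℂ} (hA : A.IsHermitian)
    (hB : B.IsHermitian) (k j : Fin n) : ℝ :=
  Complex.normSq ((star (hA.eigenvectorUnitary : Matrix (Fin n) (Fin n) ℂ) *
    (hB.eigenvectorUnitary : Matrix (Fin n) (Fin n) ℂ)) k j)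

lemma pmat_nonneg {A B : Matrix (Fin n) (Fin n) ℂ} (hA : A.IsHermitian)
    (hB : B.IsHermitian) (k j : Fin n) : 0 ≤ pmat hA hB k j :=
  Complex.normSq_nonneg _

lemma mul_star_eq_one {A B : Matrix (Fin n) (Fin n) ℂ} (hA : A.IsHermitian)
    (hB : B.IsHermitian) :
    (star (hA.eigenvectorUnitary : Matrix (Fin n) (Fin n) ℂ) *
      (hB.eigenvectorUnitary : Matrix (Fin n) (Fin n) ℂ)) *
    star (star (hA.eigenvectorUnitary : Matrix (Fin n) (Fin n) ℂ) *
      (hB.eigenvectorUnitary : Matrix (Fin n) (Fin n) ℂ)) = 1 := by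
  rw [Matrix.star_mul, star_star, Matrix.mul_assoc, ← Matrix.mul_assoc
    (hB.eigenvectorUnitary : Matrix (Fin n) (Fin n) ℂ),
    Unitary.mul_star_self_of_mem (SetLike.coe_mem _), Matrix.one_mul,
    Unitary.star_mul_self_of_mem (SetLike.coe_mem _)]

lemma star_mul_eq_one {A B : Matrix (Fin n) (Fin n) ℂ} (hA : A.IsHermitian)
    (hB : B.IsHermitian) :
    star (star (hA.eigenvectorUnitary : Matrix (Fin n) (Fin n) ℂ) *
      (hB.eigenvectorUnitary : Matrix (Fin n) (Fin n) ℂ)) *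
    (star (hA.eigenvectorUnitary : Matrix (Fin n) (Fin n) ℂ) *
      (hB.eigenvectorUnitary : Matrix (Fin n) (Fin n) ℂ)) = 1 := by
  rw [Matrix.star_mul, star_star, Matrix.mul_assoc, ← Matrix.mul_assoc
    (hA.eigenvectorUnitary : Matrix (Fin n) (Fin n) ℂ),
    Unitary.mul_star_self_of_mem (SetLike.coe_mem _), Matrix.one_mul,
    Unitary.star_mul_self_of_mem (SetLike.coe_mem _)]

lemma pmat_row_sum {A B : Matrix (Fin n) (Fin n) ℂ} (hA : A.IsHermitian)
    (hB : B.IsHermitian) (k : Fin n) : ∑ j, pmat hA hB k j = 1 := by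
  set P : Matrix (Fin n) (Fin n) ℂ := star (hA.eigenvectorUnitary : Matrix (Fin n) (Fin n) ℂ) *
    (hB.eigenvectorUnitary : Matrix (Fin n) (Fin n) ℂ) with hP
  have h2 := congrArg (fun M => M k k) (mul_star_eq_one hA hB)
  simp only [← hP] at h2
  rw [Matrix.mul_apply] at h2
  simp only [Matrix.star_apply, Matrix.one_apply_eq] at h2
  have : ∀ j : Fin n, P k j * star (P k j) = ((pmat hA hB k j : ℝ) : ℂ) :=
    fun j => Complex.mul_conj _
  rw [Finset.sum_congr rfl (fun j _ => this j)] at h2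
  exact_mod_cast h2

lemma pmat_col_sum {A B : Matrix (Fin n) (Fin n) ℂ} (hA : A.IsHermitian)
    (hB : B.IsHermitian) (j : Fin n) : ∑ k, pmat hA hB k j = 1 := by
  set P : Matrix (Fin n) (Fin n) ℂ := star (hA.eigenvectorUnitary : Matrix (Fin n) (Fin n) ℂ) *
    (hB.eigenvectorUnitary : Matrix (Fin n) (Fin n) ℂ) with hP
  have h2 := congrArg (fun M => M j j) (star_mul_eq_one hA hB)
  simp only [← hP] at h2
  rw [Matrix.mul_apply] at h2
  simp only [Matrix.star_apply, Matrix.one_apply_eq] at h2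
  have : ∀ k : Fin n, star (P k j) * P k j = ((pmat hA hB k j : ℝ) : ℂ) := by
    intro k
    rw [mul_comm]
    exact Complex.mul_conj _
  rw [Finset.sum_congr rfl (fun k _ => this k)] at h2
  exact_mod_cast h2

lemma conj_entry {A B : Matrix (Fin n) (Fin n) ℂ} (hA : A.IsHermitian)
    (hB : B.IsHermitian) (k : Fin n) :
    (star (hA.eigenvectorUnitary : Matrix (Fin n) (Fin n) ℂ) * B *
      (hA.eigenvectorUnitary : Matrix (Fin n) (Fin n) ℂ)) k k =
    ((∑ j, pmat hA hB k j * hB.eigenvalues j : ℝ) : ℂ) := by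
  have hBd : star (hA.eigenvectorUnitary : Matrix (Fin n) (Fin n) ℂ) * B *
      (hA.eigenvectorUnitary : Matrix (Fin n) (Fin n) ℂ) =
      (star (hA.eigenvectorUnitary : Matrix (Fin n) (Fin n) ℂ) *
        (hB.eigenvectorUnitary : Matrix (Fin n) (Fin n) ℂ)) *
      diagonal (RCLike.ofReal ∘ hB.eigenvalues) *
      star (star (hA.eigenvectorUnitary : Matrix (Fin n) (Fin n) ℂ) *
        (hB.eigenvectorUnitary : Matrix (Fin n) (Fin n) ℂ)) := by
    conv_lhs => rw [hB.spectral_theorem, Unitary.conjStarAlgAut_apply]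
    rw [Matrix.star_mul, star_star]
    noncomm_ring
  rw [hBd, Matrix.mul_apply]
  set P : Matrix (Fin n) (Fin n) ℂ := star (hA.eigenvectorUnitary : Matrix (Fin n) (Fin n) ℂ) *
    (hB.eigenvectorUnitary : Matrix (Fin n) (Fin n) ℂ) with hP
  simp only [Matrix.mul_diagonal, Matrix.star_apply]
  have : ∀ j : Fin n, P k j * (RCLike.ofReal ∘ hB.eigenvalues) j * star (P k j) =
      ((pmat hA hB k j * hB.eigenvalues j : ℝ) : ℂ) := by
    intro j
    have h1 : P k j * (RCLike.ofReal ∘ hB.eigenvalues) j * star (P k j) =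
        (P k j * star (P k j)) * ((hB.eigenvalues j : ℝ) : ℂ) := by
      show P k j * ((hB.eigenvalues j : ℝ) : ℂ) * star (P k j) = _
      ring
    have h2 : P k j * star (P k j) = ((Complex.normSq (P k j) : ℝ) : ℂ) := Complex.mul_conj _
    rw [h1, h2]
    have h3 : pmat hA hB k j = Complex.normSq (P k j) := rfl
    rw [h3]
    push_cast
    ring
  rw [Finset.sum_congr rfl (fun j _ => this j)]
  push_cast
  rfl


lemma wsum_r (p : Fin n → Fin n → ℝ) (hcol : ∀ j, ∑ k, p k j = 1) (g : Fin n → ℝ) :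
    ∑ k, ∑ j, p k j * g j = ∑ j, g j := by
  rw [Finset.sum_comm]
  exact Finset.sum_congr rfl fun j _ => by rw [← Finset.sum_mul, hcol, one_mul]

lemma wsum_l (p : Fin n → Fin n → ℝ) (hrow : ∀ k, ∑ j, p k j = 1) (g : Fin n → ℝ) :
    ∑ k, ∑ j, p k j * g k = ∑ k, g k :=
  Finset.sum_congr rfl fun k _ => by rw [← Finset.sum_mul, hrow, one_mul]

lemma trace_self_mul_cfc {A : Matrix (Fin n) (Fin n) ℂ} (hA : A.IsHermitian) (g : ℝ → ℝ) :
    (A * cfc g A).trace = ((∑ k, hA.eigenvalues k * g (hA.eigenvalues k) : ℝ) : ℂ) := by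
  rw [trace_mul_cfc hA A g]
  have h : ∀ k : Fin n, (star (hA.eigenvectorUnitary : Matrix (Fin n) (Fin n) ℂ) * A *
      (hA.eigenvectorUnitary : Matrix (Fin n) (Fin n) ℂ)) k k = ((hA.eigenvalues k : ℝ) : ℂ) := by
    intro k
    have h0 := hA.conjStarAlgAut_star_eigenvectorUnitary
    simp only [Unitary.conjStarAlgAut_apply, Unitary.coe_star, star_star] at h0
    rw [h0]
    simp
  rw [Finset.sum_congr rfl fun k _ => by rw [h k]]
  push_cast
  rfl

lemma trace_mul_cfc_eig {A B : Matrix (Fin n) (Fin n) ℂ} (hA : A.IsHermitian)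
    (hB : B.IsHermitian) (g : ℝ → ℝ) :
    (B * cfc g A).trace = ((∑ k, ∑ j, pmat hA hB k j *
      (hB.eigenvalues j * g (hA.eigenvalues k)) : ℝ) : ℂ) := by
  rw [trace_mul_cfc hA B g]
  rw [Finset.sum_congr rfl fun k _ => by rw [conj_entry hA hB k]]
  push_cast
  refine Finset.sum_congr rfl fun k _ => ?_
  rw [Finset.sum_mul]
  exact Finset.sum_congr rfl fun j _ => by ring

lemma trace_diff_eq {A B : Matrix (Fin n) (Fin n) ℂ} (hA : A.IsHermitian)
    (hB : B.IsHermitian) (f : ℝ → ℝ) :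
    (cfc f B).trace - (cfc f A).trace - ((B - A) * cfc (deriv f) A).trace =
    ((∑ k, ∑ j, pmat hA hB k j * (f (hB.eigenvalues j) - f (hA.eigenvalues k) -
      (hB.eigenvalues j - hA.eigenvalues k) * deriv f (hA.eigenvalues k)) : ℝ) : ℂ) := by
  set a := hA.eigenvalues
  set b := hB.eigenvalues
  set p := pmat hA hB with hp
  have key : (∑ k, ∑ j, p k j * (f (b j) - f (a k) - (b j - a k) * deriv f (a k)))
      = (∑ j, f (b j)) - (∑ k, f (a k))
        - ((∑ k, ∑ j, p k j * (b j * deriv f (a k))) - (∑ k, a k * deriv f (a k))) := by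
    have e1 : ∀ k ∈ (Finset.univ : Finset (Fin n)), ∀ j ∈ (Finset.univ : Finset (Fin n)),
        p k j * (f (b j) - f (a k) - (b j - a k) * deriv f (a k)) =
        p k j * f (b j) - p k j * f (a k)
          - (p k j * (b j * deriv f (a k)) - p k j * (a k * deriv f (a k))) :=
      fun k _ j _ => by ring
    rw [Finset.sum_congr rfl fun k hk => Finset.sum_congr rfl fun j hj => e1 k hk j hj]
    simp only [Finset.sum_sub_distrib]
    rw [wsum_r p (pmat_col_sum hA hB) (fun j => f (b j)),
      wsum_l p (pmat_row_sum hA hB) (fun k => f (a k)),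
      wsum_l p (pmat_row_sum hA hB) (fun k => a k * deriv f (a k))]
  rw [sub_mul, Matrix.trace_sub, trace_cfc_herm hB f, trace_cfc_herm hA f,
    trace_mul_cfc_eig hA hB (deriv f), trace_self_mul_cfc hA (deriv f), key]
  push_cast
  ring

lemma trace_sq_eq {A B : Matrix (Fin n) (Fin n) ℂ} (hA : A.IsHermitian) (hB : B.IsHermitian) :
    ((B - A) * (B - A)).trace = ((∑ k, ∑ j, pmat hA hB k j *
      (hB.eigenvalues j - hA.eigenvalues k)^2 : ℝ) : ℂ) := by
  set a := hA.eigenvalues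
  set b := hB.eigenvalues
  set p := pmat hA hB with hp
  have hA' : IsSelfAdjoint A := hA
  have hB' : IsSelfAdjoint B := hB
  have hBB : (B * B).trace = ((∑ j, b j * b j : ℝ) : ℂ) := by
    conv_lhs => rw [show B * B = B * cfc id B by rw [cfc_id ℝ B hB']]
    exact trace_self_mul_cfc hB id
  have hAA : (A * A).trace = ((∑ k, a k * a k : ℝ) : ℂ) := by
    conv_lhs => rw [show A * A = A * cfc id A by rw [cfc_id ℝ A hA']]
    exact trace_self_mul_cfc hA id
  have hBA : (B * A).trace = ((∑ k, ∑ j, p k j * (b j * a k) : ℝ) : ℂ) := by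
    conv_lhs => rw [show B * A = B * cfc id A by rw [cfc_id ℝ A hA']]
    exact trace_mul_cfc_eig hA hB id
  have hAB : (A * B).trace = ((∑ k, ∑ j, p k j * (b j * a k) : ℝ) : ℂ) := by
    rw [Matrix.trace_mul_comm]; exact hBA
  have hexp : (B - A) * (B - A) = B * B - B * A - (A * B - A * A) := by noncomm_ring
  have key : (∑ k, ∑ j, p k j * (b j - a k)^2)
      = (∑ j, b j * b j) - (∑ k, ∑ j, p k j * (b j * a k))
        - ((∑ k, ∑ j, p k j * (b j * a k)) - (∑ k, a k * a k)) := by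
    have e1 : ∀ k ∈ (Finset.univ : Finset (Fin n)), ∀ j ∈ (Finset.univ : Finset (Fin n)),
        p k j * (b j - a k)^2 =
        p k j * (b j * b j) - p k j * (b j * a k)
          - (p k j * (b j * a k) - p k j * (a k * a k)) :=
      fun k _ j _ => by ring
    rw [Finset.sum_congr rfl fun k hk => Finset.sum_congr rfl fun j hj => e1 k hk j hj]
    simp only [Finset.sum_sub_distrib]
    rw [wsum_r p (pmat_col_sum hA hB) (fun j => b j * b j),
      wsum_l p (pmat_row_sum hA hB) (fun k => a k * a k)]
  rw [hexp, Matrix.trace_sub, Matrix.trace_sub, Matrix.trace_sub, hBB, hAA, hBA, hAB, key]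
  push_cast
  ring

lemma trace_sq_entries {C : Matrix (Fin n) (Fin n) ℂ} (hC : C.IsHermitian) :
    (C * C).trace = ((∑ i, ∑ j, Complex.normSq (C i j) : ℝ) : ℂ) := by
  have h : ∀ i j : Fin n, C i j * C j i = ((Complex.normSq (C i j) : ℝ) : ℂ) := by
    intro i j
    have hji : C j i = star (C i j) := by
      conv_lhs => rw [← hC]
      rfl
    rw [hji]
    exact Complex.mul_conj _
  unfold Matrix.trace
  simp only [Matrix.diag_apply, Matrix.mul_apply]
  rw [Finset.sum_congr rfl fun i _ => Finset.sum_congr rfl fun j _ => h i j]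
  push_cast
  rfl

lemma eig_sq_sum {A : Matrix (Fin n) (Fin n) ℂ} (hA : A.IsHermitian) :
    ∑ k, (hA.eigenvalues k)^2 = ∑ i, ∑ j, Complex.normSq (A i j) := by
  have hA' : IsSelfAdjoint A := hA
  have h1 := trace_sq_entries hA
  have h2 : (A * A).trace = ((∑ k, hA.eigenvalues k * hA.eigenvalues k : ℝ) : ℂ) := by
    conv_lhs => rw [show A * A = A * cfc id A by rw [cfc_id ℝ A hA']]
    exact trace_self_mul_cfc hA id
  rw [h1] at h2
  have := Complex.ofReal_injective h2.symm
  rw [Finset.sum_congr rfl fun k _ => sq (hA.eigenvalues k)]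
  exact this


lemma normSq_sum_le (A : Matrix (Fin n) (Fin n) ℂ) :
    ∑ i, ∑ j, Complex.normSq (A i j) ≤ (n : ℝ)^2 * ‖A‖^2 := by
  have h : ∀ i j : Fin n, Complex.normSq (A i j) ≤ ‖A‖^2 := by
    intro i j
    have h1 : ‖A i j‖ ≤ ‖A‖ := Matrix.norm_entry_le_entrywise_sup_norm A
    have h2 : Complex.normSq (A i j) = ‖A i j‖^2 := by
      rw [Complex.normSq_eq_norm_sq]
    rw [h2]
    exact pow_le_pow_left₀ (norm_nonneg _) h1 2
  calc ∑ i, ∑ j, Complex.normSq (A i j) ≤ ∑ i : Fin n, ∑ j : Fin n, ‖A‖^2 := by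
        exact Finset.sum_le_sum fun i _ => Finset.sum_le_sum fun j _ => h i j
    _ = (n : ℝ)^2 * ‖A‖^2 := by
        simp [Finset.sum_const, Finset.card_univ]
        ring

lemma eig_abs_le {A : Matrix (Fin n) (Fin n) ℂ} (hA : A.IsHermitian) (i : Fin n) :
    |hA.eigenvalues i| ≤ (n : ℝ) * ‖A‖ := by
  have h1 : (hA.eigenvalues i)^2 ≤ ∑ k, (hA.eigenvalues k)^2 :=
    Finset.single_le_sum (f := fun k => (hA.eigenvalues k)^2) (fun k _ => sq_nonneg _) (Finset.mem_univ i)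
  have h2 : ∑ k, (hA.eigenvalues k)^2 ≤ (n : ℝ)^2 * ‖A‖^2 :=
    (eig_sq_sum hA) ▸ normSq_sum_le A
  have h3 : (0:ℝ) ≤ (n : ℝ) * ‖A‖ := by positivity
  nlinarith [abs_nonneg (hA.eigenvalues i), sq_abs (hA.eigenvalues i)]

lemma norm_trace_mul_le (M N : Matrix (Fin n) (Fin n) ℂ) :
    ‖(M * N).trace‖ ≤ (n : ℝ)^2 * (‖M‖ * ‖N‖) := by
  have h : ∀ i j : Fin n, ‖M i j * N j i‖ ≤ ‖M‖ * ‖N‖ := by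
    intro i j
    rw [norm_mul]
    exact mul_le_mul (Matrix.norm_entry_le_entrywise_sup_norm M)
      (Matrix.norm_entry_le_entrywise_sup_norm N) (norm_nonneg _) (norm_nonneg _)
  calc ‖(M * N).trace‖ = ‖∑ i, ∑ j, M i j * N j i‖ := by
        unfold Matrix.trace
        simp only [Matrix.diag_apply, Matrix.mul_apply]
    _ ≤ ∑ i, ‖∑ j, M i j * N j i‖ := norm_sum_le _ _
    _ ≤ ∑ i : Fin n, ∑ j : Fin n, ‖M i j * N j i‖ :=
        Finset.sum_le_sum fun i _ => norm_sum_le _ _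
    _ ≤ ∑ i : Fin n, ∑ j : Fin n, (‖M‖ * ‖N‖) :=
        Finset.sum_le_sum fun i _ => Finset.sum_le_sum fun j _ => h i j
    _ = (n : ℝ)^2 * (‖M‖ * ‖N‖) := by
        simp [Finset.sum_const, Finset.card_univ]
        ring

lemma key_est (hn : 1 ≤ n) {A B : Matrix (Fin n) (Fin n) ℂ} (hA : A.IsHermitian) (hB : B.IsHermitian)
    (f : ℝ → ℝ) (ε K : ℝ) (hε : 0 ≤ ε) (hK : 0 ≤ K)
    (hb : ∀ k j, |f (hB.eigenvalues j) - f (hA.eigenvalues k) -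
        (hB.eigenvalues j - hA.eigenvalues k) * deriv f (hA.eigenvalues k)|
        ≤ ε * |hB.eigenvalues j - hA.eigenvalues k| + K * (hB.eigenvalues j - hA.eigenvalues k)^2) :
    ‖(cfc f B).trace - (cfc f A).trace - ((B - A) * cfc (deriv f) A).trace‖ ≤
      ε * ((n:ℝ)^2 * ‖B - A‖) + K * ((n:ℝ)^2 * ‖B - A‖^2) := by
  set a := hA.eigenvalues
  set b := hB.eigenvalues
  set p := pmat hA hB with hp
  set S : ℝ := ∑ k, ∑ j, p k j * (b j - a k)^2 with hS
  set T : ℝ := ∑ k, ∑ j, p k j * |b j - a k| with hT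
  have hCherm : (B - A).IsHermitian := hB.sub hA
  -- S ≤ n^2 ‖B - A‖^2
  have hS_eq : ((S : ℝ) : ℂ) = ((∑ i, ∑ j, Complex.normSq ((B - A) i j) : ℝ) : ℂ) := by
    rw [← trace_sq_eq hA hB, trace_sq_entries hCherm]
  have hS_le : S ≤ (n:ℝ)^2 * ‖B - A‖^2 :=
    (Complex.ofReal_injective hS_eq) ▸ normSq_sum_le (B - A)
  have hS_nonneg : 0 ≤ S :=
    Finset.sum_nonneg fun k _ => Finset.sum_nonneg fun j _ =>
      mul_nonneg (pmat_nonneg hA hB k j) (sq_nonneg _)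
  have hT_nonneg : 0 ≤ T :=
    Finset.sum_nonneg fun k _ => Finset.sum_nonneg fun j _ =>
      mul_nonneg (pmat_nonneg hA hB k j) (abs_nonneg _)
  -- Cauchy-Schwarz on the double sum, via the product index set
  have hT_sq : T^2 ≤ (n:ℝ) * S := by
    have hTprod : T = ∑ kj : Fin n × Fin n, p kj.1 kj.2 * |b kj.2 - a kj.1| := by
      rw [hT, ← Finset.sum_product']
      rfl
    have hSprod : S = ∑ kj : Fin n × Fin n, p kj.1 kj.2 * (b kj.2 - a kj.1)^2 := by
      rw [hS, ← Finset.sum_product']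
      rfl
    have hPsum : ∑ kj : Fin n × Fin n, p kj.1 kj.2 = (n : ℝ) := by
      rw [← Finset.univ_product_univ, Finset.sum_product]
      have : ∀ k : Fin n, ∑ j, p k j = (1:ℝ) := pmat_row_sum hA hB
      simp [this]
    have := Finset.sum_sq_le_sum_mul_sum_of_sq_eq_mul (Finset.univ : Finset (Fin n × Fin n))
      (r := fun kj => p kj.1 kj.2 * |b kj.2 - a kj.1|)
      (f := fun kj => p kj.1 kj.2)
      (g := fun kj => p kj.1 kj.2 * (b kj.2 - a kj.1)^2)
      (fun kj _ => pmat_nonneg hA hB kj.1 kj.2)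
      (fun kj _ => mul_nonneg (pmat_nonneg hA hB kj.1 kj.2) (sq_nonneg _))
      (fun kj _ => by rw [mul_pow, sq_abs]; ring)
    rw [← hTprod, ← hSprod, hPsum] at this
    exact this
  have hT_le : T ≤ (n:ℝ)^2 * ‖B - A‖ := by
    have hn2 : (0:ℝ) ≤ (n:ℝ)^2 * ‖B - A‖ := by positivity
    have hn1 : (1:ℝ) ≤ (n:ℝ) := by exact_mod_cast hn
    have hsq : T^2 ≤ ((n:ℝ)^2 * ‖B - A‖)^2 := by
      nlinarith [norm_nonneg (B - A), hT_sq, hS_le, hT_nonneg, sq_nonneg ‖B - A‖,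
        mul_nonneg (mul_nonneg (sq_nonneg (n:ℝ)) (sub_nonneg.mpr hn1)) (sq_nonneg ‖B - A‖)]
    exact (pow_le_pow_iff_left₀ hT_nonneg hn2 two_ne_zero).mp hsq
  -- main bound
  rw [trace_diff_eq hA hB f]
  rw [Complex.norm_real]
  calc |∑ k, ∑ j, p k j * (f (b j) - f (a k) - (b j - a k) * deriv f (a k))|
      ≤ ∑ k, ∑ j, |p k j * (f (b j) - f (a k) - (b j - a k) * deriv f (a k))| := by
        refine (Finset.abs_sum_le_sum_abs _ _).trans ?_
        exact Finset.sum_le_sum fun k _ => Finset.abs_sum_le_sum_abs _ _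
    _ ≤ ∑ k, ∑ j, (ε * (p k j * |b j - a k|) + K * (p k j * (b j - a k)^2)) := by
        refine Finset.sum_le_sum fun k _ => Finset.sum_le_sum fun j _ => ?_
        rw [abs_mul, abs_of_nonneg (pmat_nonneg hA hB k j)]
        calc p k j * |f (b j) - f (a k) - (b j - a k) * deriv f (a k)|
            ≤ p k j * (ε * |b j - a k| + K * (b j - a k)^2) :=
              mul_le_mul_of_nonneg_left (hb k j) (pmat_nonneg hA hB k j)
          _ = ε * (p k j * |b j - a k|) + K * (p k j * (b j - a k)^2) := by ring
    _ = ε * T + K * S := by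
        simp only [Finset.sum_add_distrib, ← Finset.mul_sum]
        rfl
    _ ≤ ε * ((n:ℝ)^2 * ‖B - A‖) + K * ((n:ℝ)^2 * ‖B - A‖^2) := by
        gcongr


lemma taylor_bound {f : ℝ → ℝ} (hf : ContDiff ℝ 1 f) {R ε δ M : ℝ} (hδ : 0 < δ) (hε : 0 ≤ ε)
    (hM : ∀ z, |z| ≤ R → |deriv f z| ≤ M)
    (hmod : ∀ z w, |z| ≤ R → |w| ≤ R → |z - w| < δ → |deriv f z - deriv f w| ≤ ε)
    {x y : ℝ} (hx : |x| ≤ R) (hy : |y| ≤ R) :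
    |f y - f x - (y - x) * deriv f x| ≤ ε * |y - x| + (2*M/δ) * (y - x)^2 := by
  have hdiff : Differentiable ℝ f := hf.differentiable one_ne_zero
  have hM0 : 0 ≤ M := (abs_nonneg _).trans (hM x hx)
  rcases eq_or_ne y x with rfl | hne
  · simp
  obtain ⟨z, hzR, hzx, heq⟩ : ∃ z, |z| ≤ R ∧ |z - x| ≤ |y - x| ∧
      f y - f x = (y - x) * deriv f z := by
    rcases lt_or_gt_of_ne hne with hlt | hgt
    · -- y < x
      obtain ⟨z, hz, hslope⟩ := exists_hasDerivAt_eq_slope f (deriv f) hlt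
        hdiff.continuous.continuousOn (fun w _ => (hdiff w).hasDerivAt)
      have hyR := abs_le.mp hy
      have hxR := abs_le.mp hx
      refine ⟨z, abs_le.mpr ⟨by linarith [hz.1, hz.2], by linarith [hz.1, hz.2]⟩, ?_, ?_⟩
      · rw [abs_of_nonpos (by linarith [hz.2] : z - x ≤ 0),
          abs_of_nonpos (by linarith : y - x ≤ 0)]
        linarith [hz.1]
      · have hxy : x - y ≠ 0 := by intro h; apply hne; linarith [sub_eq_zero.mp h]
        rw [hslope]
        field_simp
        ring
    · -- x < y
      obtain ⟨z, hz, hslope⟩ := exists_hasDerivAt_eq_slope f (deriv f) hgt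
        hdiff.continuous.continuousOn (fun w _ => (hdiff w).hasDerivAt)
      have hyR := abs_le.mp hy
      have hxR := abs_le.mp hx
      refine ⟨z, abs_le.mpr ⟨by linarith [hz.1, hz.2], by linarith [hz.1, hz.2]⟩, ?_, ?_⟩
      · rw [abs_of_nonneg (by linarith [hz.1] : (0:ℝ) ≤ z - x),
          abs_of_nonneg (by linarith : (0:ℝ) ≤ y - x)]
        linarith [hz.2]
      · have hxy : y - x ≠ 0 := sub_ne_zero.mpr hne
        rw [hslope]
        field_simp
  have hfact : f y - f x - (y - x) * deriv f x = (y - x) * (deriv f z - deriv f x) := by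
    rw [heq]; ring
  rw [hfact, abs_mul]
  by_cases hcase : |y - x| < δ
  · have h1 : |deriv f z - deriv f x| ≤ ε := hmod z x hzR hx (lt_of_le_of_lt hzx hcase)
    have h2 : (0:ℝ) ≤ (2*M/δ) * (y - x)^2 := by positivity
    have h3 : |y - x| * |deriv f z - deriv f x| ≤ |y - x| * ε :=
      mul_le_mul_of_nonneg_left h1 (abs_nonneg _)
    nlinarith [abs_nonneg (y - x)]
  · push_neg at hcase
    have h1 : |deriv f z - deriv f x| ≤ 2*M := by
      calc |deriv f z - deriv f x| ≤ |deriv f z| + |deriv f x| := abs_sub _ _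
        _ ≤ M + M := add_le_add (hM z hzR) (hM x hx)
        _ = 2*M := by ring
    have hkey : δ * |y - x| ≤ |y - x| * |y - x| :=
      mul_le_mul_of_nonneg_right hcase (abs_nonneg _)
    have h4 : (0:ℝ) ≤ ε * |y - x| := mul_nonneg hε (abs_nonneg _)
    calc |y - x| * |deriv f z - deriv f x| ≤ |y - x| * (2*M) :=
          mul_le_mul_of_nonneg_left h1 (abs_nonneg _)
      _ = (2*M/δ) * (δ * |y - x|) := by field_simp
      _ ≤ (2*M/δ) * (|y - x| * |y - x|) :=
          mul_le_mul_of_nonneg_left hkey (by positivity)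
      _ = (2*M/δ) * (y - x)^2 := by rw [← sq_abs]; ring
      _ ≤ ε * |y - x| + (2*M/δ) * (y - x)^2 := by linarith

end TCfc

open TCfc Filter Topology

set_option maxHeartbeats 1600000 in
theorem hasDerivAt_trace_cfc
    (n : ℕ) (hn : 1 ≤ n)
    (D : ℝ → Matrix (Fin n) (Fin n) ℂ)
    (hD : ∀ t, (D t).IsHermitian)
    (D' : ℝ → Matrix (Fin n) (Fin n) ℂ)
    (hderiv : ∀ t, HasDerivAt D (D' t) t)
    (hD'cont : Continuous D')
    (f : ℝ → ℝ) (hf : ContDiff ℝ 1 f) :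
    ∀ t : ℝ, HasDerivAt (fun s => (cfc f (D s)).trace)
      ((D' t * cfc (deriv f) (D t)).trace) t := by
  intro t
  have hdf : Continuous (deriv f) := hf.continuous_deriv le_rfl
  have hA : (D t).IsHermitian := hD t
  set A : Matrix (Fin n) (Fin n) ℂ := D t with hAdef
  set A' : Matrix (Fin n) (Fin n) ℂ := D' t with hA'def
  set C : Matrix (Fin n) (Fin n) ℂ := cfc (deriv f) A with hCdef
  set L1 : ℝ := ‖A'‖ + 1 with hL1def
  have hL1pos : 0 < L1 := by positivity
  have hL1nn : 0 ≤ L1 := hL1pos.le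
  set R : ℝ := (n:ℝ) * (‖A‖ + 1) with hRdef
  have hR0 : 0 ≤ R := by positivity
  obtain ⟨M, hMb⟩ : ∃ M, ∀ z ∈ Set.Icc (-R) R, ‖deriv f z‖ ≤ M :=
    isCompact_Icc.exists_bound_of_continuousOn hdf.continuousOn
  have hM' : ∀ z, |z| ≤ R → |deriv f z| ≤ M := by
    intro z hz
    exact hMb z ⟨(abs_le.mp hz).1, (abs_le.mp hz).2⟩
  have hM0 : 0 ≤ M := (abs_nonneg _).trans (hM' 0 (by simpa using hR0))
  clear_value A A' C
  rw [hasDerivAt_iff_isLittleO, Asymptotics.isLittleO_iff]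
  intro c hc
  set ε : ℝ := c / (3 * ((n:ℝ)^2 * L1 + 1)) with hεdef
  have hεpos : 0 < ε := by positivity
  have huc := (isCompact_Icc (a := -R) (b := R)).uniformContinuousOn_of_continuous
    hdf.continuousOn
  rw [Metric.uniformContinuousOn_iff] at huc
  obtain ⟨δ, hδpos, hδ⟩ := huc ε hεpos
  have hmod : ∀ z w, |z| ≤ R → |w| ≤ R → |z - w| < δ → |deriv f z - deriv f w| ≤ ε := by
    intro z w hz hw hzw
    have := hδ z ⟨(abs_le.mp hz).1, (abs_le.mp hz).2⟩ w ⟨(abs_le.mp hw).1, (abs_le.mp hw).2⟩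
      (by rwa [Real.dist_eq])
    rw [Real.dist_eq] at this
    exact this.le
  set K : ℝ := 2*M/δ with hKdef
  have hK0 : 0 ≤ K := by positivity
  clear_value L1 R ε K
  set ε2 : ℝ := c / (3 * ((n:ℝ)^2 * ‖C‖ + 1)) with hε2def
  have hε2pos : 0 < ε2 := by positivity
  set r3 : ℝ := c / (3 * (K * (n:ℝ)^2 * L1^2 + 1)) with hr3def
  have hr3pos : 0 < r3 := by positivity
  clear_value ε2 r3
  have hd := hasDerivAt_iff_isLittleO.mp (hderiv t)
  rw [← hAdef, ← hA'def] at hd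
  have ev1 : ∀ᶠ s in 𝓝 t, ‖D s - A - (s - t) • A'‖ ≤ 1 * ‖s - t‖ :=
    Asymptotics.isLittleO_iff.mp hd one_pos
  have ev2 : ∀ᶠ s in 𝓝 t, ‖D s - A - (s - t) • A'‖ ≤ ε2 * ‖s - t‖ :=
    Asymptotics.isLittleO_iff.mp hd hε2pos
  have ev3 : ∀ᶠ s in 𝓝 t, ‖D s‖ ≤ ‖A‖ + 1 := by
    have htend : Filter.Tendsto D (𝓝 t) (𝓝 A) := by
      rw [hAdef]
      exact (hderiv t).continuousAt
    filter_upwards [htend (Metric.closedBall_mem_nhds A one_pos)] with s hs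
    simp only [Set.mem_preimage, Metric.mem_closedBall] at hs
    rw [dist_eq_norm] at hs
    calc ‖D s‖ = ‖(D s - A) + A‖ := by rw [sub_add_cancel]
      _ ≤ ‖D s - A‖ + ‖A‖ := norm_add_le _ _
      _ ≤ 1 + ‖A‖ := by linarith
      _ = ‖A‖ + 1 := by ring
  have ev4 : ∀ᶠ s in 𝓝 t, |s - t| ≤ r3 := by
    filter_upwards [Metric.closedBall_mem_nhds t hr3pos] with s hs
    rw [Metric.mem_closedBall, Real.dist_eq] at hs
    exact hs
  filter_upwards [ev1, ev2, ev3, ev4] with s h1 h2 h3 h4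
  set B : Matrix (Fin n) (Fin n) ℂ := D s with hBdef
  have hB : B.IsHermitian := hD s
  clear_value B
  -- norm of B - A
  have hBA : ‖B - A‖ ≤ L1 * |s - t| := by
    have : ‖B - A‖ ≤ ‖B - A - (s - t) • A'‖ + ‖(s - t) • A'‖ := by
      calc ‖B - A‖ = ‖(B - A - (s - t) • A') + (s - t) • A'‖ := by rw [sub_add_cancel]
        _ ≤ _ := norm_add_le _ _
    rw [norm_smul, Real.norm_eq_abs] at this
    rw [Real.norm_eq_abs] at h1
    calc ‖B - A‖ ≤ ‖B - A - (s - t) • A'‖ + |s - t| * ‖A'‖ := this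
      _ ≤ 1 * |s - t| + |s - t| * ‖A'‖ := by linarith
      _ = L1 * |s - t| := by rw [hL1def]; ring
  have hBAnn : (0:ℝ) ≤ ‖B - A‖ := norm_nonneg _
  -- eigenvalue bounds
  have haR : ∀ k, |hA.eigenvalues k| ≤ R := by
    intro k
    calc |hA.eigenvalues k| ≤ (n:ℝ) * ‖A‖ := eig_abs_le hA k
      _ ≤ R := by
        rw [hRdef]
        have : ‖A‖ ≤ ‖A‖ + 1 := by linarith
        exact mul_le_mul_of_nonneg_left this (Nat.cast_nonneg n)
  have hbR : ∀ j, |hB.eigenvalues j| ≤ R := by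
    intro j
    calc |hB.eigenvalues j| ≤ (n:ℝ) * ‖B‖ := eig_abs_le hB j
      _ ≤ R := by
        rw [hRdef]
        exact mul_le_mul_of_nonneg_left h3 (Nat.cast_nonneg n)
  -- per-eigenvalue Taylor bound
  have hb : ∀ k j, |f (hB.eigenvalues j) - f (hA.eigenvalues k) -
      (hB.eigenvalues j - hA.eigenvalues k) * deriv f (hA.eigenvalues k)|
      ≤ ε * |hB.eigenvalues j - hA.eigenvalues k| +
        K * (hB.eigenvalues j - hA.eigenvalues k)^2 := by
    intro k j
    rw [hKdef]
    exact taylor_bound hf hδpos hεpos.le hM' hmod (haR k) (hbR j)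
  have hX := key_est hn hA hB f ε K hεpos.le hK0 hb
  rw [← hCdef] at hX
  -- second error term
  have hY : ‖((B - A - (s - t) • A') * C).trace‖ ≤ (n:ℝ)^2 * (ε2 * |s - t| * ‖C‖) := by
    calc ‖((B - A - (s - t) • A') * C).trace‖
        ≤ (n:ℝ)^2 * (‖B - A - (s - t) • A'‖ * ‖C‖) := norm_trace_mul_le _ _
      _ ≤ (n:ℝ)^2 * (ε2 * |s - t| * ‖C‖) := by
          have h2' : ‖B - A - (s - t) • A'‖ ≤ ε2 * |s - t| := by
            rwa [Real.norm_eq_abs] at h2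
          gcongr
  -- decomposition
  have hdecomp : (cfc f B).trace - (cfc f A).trace - (s - t) • (A' * C).trace =
      ((cfc f B).trace - (cfc f A).trace - ((B - A) * C).trace) +
        ((B - A - (s - t) • A') * C).trace := by
    have hmul : (B - A - (s - t) • A') * C = (B - A) * C - (s - t) • (A' * C) := by
      rw [sub_mul, smul_mul_assoc]
    rw [hmul, Matrix.trace_sub, Matrix.trace_smul]
    ring_nf
  -- numeric bounds
  have hq1 : ε * ((n:ℝ)^2 * L1) ≤ c / 3 := by
    have hpos : (0:ℝ) < (n:ℝ)^2 * L1 + 1 := by positivity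
    have : ε * ((n:ℝ)^2 * L1 + 1) = c / 3 := by
      rw [hεdef]
      field_simp
    nlinarith
  have hq2 : K * (n:ℝ)^2 * L1^2 * |s - t| ≤ c / 3 := by
    have hpos : (0:ℝ) < K * (n:ℝ)^2 * L1^2 + 1 := by positivity
    have he : r3 * (K * (n:ℝ)^2 * L1^2 + 1) = c / 3 := by
      rw [hr3def]
      field_simp
    have h5 : K * (n:ℝ)^2 * L1^2 * |s - t| ≤ (K * (n:ℝ)^2 * L1^2 + 1) * r3 := by
      have hnn : (0:ℝ) ≤ K * (n:ℝ)^2 * L1^2 := by positivity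
      nlinarith [abs_nonneg (s - t)]
    nlinarith
  have hq3 : ε2 * ((n:ℝ)^2 * ‖C‖) ≤ c / 3 := by
    have hpos : (0:ℝ) < (n:ℝ)^2 * ‖C‖ + 1 := by positivity
    have : ε2 * ((n:ℝ)^2 * ‖C‖ + 1) = c / 3 := by
      rw [hε2def]
      field_simp
    nlinarith
  -- final estimate
  rw [← hAdef, Real.norm_eq_abs]
  calc ‖(cfc f B).trace - (cfc f A).trace - (s - t) • (A' * C).trace‖
      = ‖((cfc f B).trace - (cfc f A).trace - ((B - A) * C).trace) +
          ((B - A - (s - t) • A') * C).trace‖ := by rw [hdecomp]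
    _ ≤ ‖(cfc f B).trace - (cfc f A).trace - ((B - A) * C).trace‖ +
          ‖((B - A - (s - t) • A') * C).trace‖ := norm_add_le _ _
    _ ≤ (ε * ((n:ℝ)^2 * ‖B - A‖) + K * ((n:ℝ)^2 * ‖B - A‖^2)) +
          (n:ℝ)^2 * (ε2 * |s - t| * ‖C‖) := add_le_add hX hY
    _ ≤ c * |s - t| := by
        have e1 : ε * ((n:ℝ)^2 * ‖B - A‖) ≤ ε * ((n:ℝ)^2 * (L1 * |s - t|)) := by gcongr
        have e2 : K * ((n:ℝ)^2 * ‖B - A‖^2) ≤ K * ((n:ℝ)^2 * (L1 * |s - t|)^2) := by gcongr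
        have e1' : ε * ((n:ℝ)^2 * (L1 * |s - t|)) = (ε * ((n:ℝ)^2 * L1)) * |s - t| := by ring
        have e2' : K * ((n:ℝ)^2 * (L1 * |s - t|)^2) =
            (K * (n:ℝ)^2 * L1^2 * |s - t|) * |s - t| := by ring
        have e3' : (n:ℝ)^2 * (ε2 * |s - t| * ‖C‖) = (ε2 * ((n:ℝ)^2 * ‖C‖)) * |s - t| := by ring
        have habs : (0:ℝ) ≤ |s - t| := abs_nonneg _
        have b1 : (ε * ((n:ℝ)^2 * L1)) * |s - t| ≤ (c/3) * |s - t| :=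
          mul_le_mul_of_nonneg_right hq1 habs
        have b2 : (K * (n:ℝ)^2 * L1^2 * |s - t|) * |s - t| ≤ (c/3) * |s - t| :=
          mul_le_mul_of_nonneg_right hq2 habs
        have b3 : (ε2 * ((n:ℝ)^2 * ‖C‖)) * |s - t| ≤ (c/3) * |s - t| :=
          mul_le_mul_of_nonneg_right hq3 habs
        linarith
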